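/- Let S be a ring graded by a small groupoid G. Then S is epsilon-strongly graded if and only if every graded left S-module M is epsilon-strongly graded, i.e., for all composable (g,h), S_g M_h = S_g S_{g^{-1}} M_{gh}. -/

import Mathlib

/- Setup: a ring `S` graded by a small groupoid.  The groupoid is given by a
`CategoryTheory.Groupoid` structure on a type `Obj` of objects.  Composition
convention: for `g : X ⟶ Y` and `h : Y ⟶ Z`, `g ≫ h : X ⟶ Z`; the grading
satisfies `S_g · S_h ⊆ S_{g ≫ h}` for composable morphisms and
`S_g · S_h = 0` otherwise, and `S = ⊕_{g} S_g` (an internal direct sum over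
the type of all morphisms). -/

open CategoryTheory DirectSum

/-- The type of all morphisms of the groupoid. -/
abbrev MorTot (Obj : Type u) [Groupoid.{v} Obj] : Type (max u v) := Σ X Y : Obj, X ⟶ Y

/-- Product of two additive subgroups of a ring: the additive span of the set of
pairwise products. -/
def aMul {S : Type w} [Ring S] (A B : AddSubgroup S) : AddSubgroup S :=
  AddSubgroup.closure {x : S | ∃ a ∈ A, ∃ b ∈ B, x = a * b}

/-- A grading of the ring `S` by the groupoid with objects `Obj`. -/
structure GroupoidGrading (Obj : Type u) [Groupoid.{v} Obj] [DecidableEq (MorTot Obj)]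
    (S : Type w) [Ring S] where
  comp : ∀ ⦃X Y : Obj⦄, (X ⟶ Y) → AddSubgroup S
  internal : DirectSum.IsInternal (fun g : MorTot Obj => comp g.2.2)
  mul_mem : ∀ ⦃X Y Z : Obj⦄ (g : X ⟶ Y) (h : Y ⟶ Z) ⦃a b : S⦄,
    a ∈ comp g → b ∈ comp h → a * b ∈ comp (g ≫ h)
  mul_eq_zero : ∀ ⦃X Y Z W : Obj⦄ (g : X ⟶ Y) (h : Z ⟶ W), Y ≠ Z →
    ∀ ⦃a b : S⦄, a ∈ comp g → b ∈ comp h → a * b = 0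

variable {Obj : Type u} [Groupoid.{v} Obj] [DecidableEq (MorTot Obj)]
  {S : Type w} [Ring S]

/-- The component `(1_S)_e ∈ S_e` of `1` at the identity morphism of `X`. -/
noncomputable def GroupoidGrading.oneComponent (hS : GroupoidGrading Obj S) (X : Obj) : S :=
  ((Equiv.ofBijective _ hS.internal).symm (1 : S) ⟨X, X, 𝟙 X⟩ : hS.comp (𝟙 X))

/-- `I` is a unital ideal of the (sub)ring `C`. -/
def IsUnitalIdealOf {S : Type w} [Ring S] (I C : AddSubgroup S) : Prop :=
  I ≤ C ∧ (∀ a ∈ C, ∀ x ∈ I, a * x ∈ I ∧ x * a ∈ I) ∧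
    ∃ e ∈ I, ∀ x ∈ I, e * x = x ∧ x * e = x

/-- `S` is epsilon-strongly graded: each `S_g S_{g⁻¹}` is a unital ideal of
`S_{c(g)}` and `S_g S_h = (S_g S_{g⁻¹}) S_{gh} = S_{gh} (S_{h⁻¹} S_h)` for all
composable pairs. -/
def GroupoidGrading.EpsilonStrong {Obj : Type u} [Groupoid.{v} Obj]
    [DecidableEq (MorTot Obj)] {S : Type w} [Ring S]
    (hS : GroupoidGrading Obj S) : Prop :=
  (∀ ⦃X Y : Obj⦄ (g : X ⟶ Y),
     IsUnitalIdealOf (aMul (hS.comp g) (hS.comp (Groupoid.inv g))) (hS.comp (𝟙 X))) ∧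
  (∀ ⦃X Y Z : Obj⦄ (g : X ⟶ Y) (h : Y ⟶ Z),
     aMul (hS.comp g) (hS.comp h)
       = aMul (aMul (hS.comp g) (hS.comp (Groupoid.inv g))) (hS.comp (g ≫ h)) ∧
     aMul (hS.comp g) (hS.comp h)
       = aMul (hS.comp (g ≫ h)) (aMul (hS.comp (Groupoid.inv h)) (hS.comp h)))

/-- A grading of a left `S`-module `M` by the groupoid: `M = ⊕_g M_g` with
`S_g • M_h ⊆ M_{gh}` for composable pairs and `S_g • M_h = 0` otherwise. -/
structure GradedModule {Obj : Type u} [Groupoid.{v} Obj] [DecidableEq (MorTot Obj)]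
    {S : Type w} [Ring S] (hS : GroupoidGrading Obj S)
    (M : Type w) [AddCommGroup M] [Module S M] where
  comp : ∀ ⦃X Y : Obj⦄, (X ⟶ Y) → AddSubgroup M
  internal : DirectSum.IsInternal (fun g : MorTot Obj => comp g.2.2)
  smul_mem : ∀ ⦃X Y Z : Obj⦄ (g : X ⟶ Y) (h : Y ⟶ Z) ⦃s : S⦄ ⦃m : M⦄,
    s ∈ hS.comp g → m ∈ comp h → s • m ∈ comp (g ≫ h)
  smul_eq_zero : ∀ ⦃X Y Z W : Obj⦄ (g : X ⟶ Y) (h : Z ⟶ W), Y ≠ Z →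
    ∀ ⦃s : S⦄ ⦃m : M⦄, s ∈ hS.comp g → m ∈ comp h → s • m = 0

/-- The additive span of `A • B` for an additive subgroup `A` of the ring and an
additive subgroup `B` of the module. -/
def aSMul {S : Type w} [Ring S] {M : Type w} [AddCommGroup M] [Module S M]
    (A : AddSubgroup S) (B : AddSubgroup M) : AddSubgroup M :=
  AddSubgroup.closure {x : M | ∃ a ∈ A, ∃ b ∈ B, x = a • b}

/-- A graded left module is epsilon-strongly graded: each `S_g S_{g⁻¹}` is a unital
ideal of `S_{c(g)}` and `S_g M_h = (S_g S_{g⁻¹}) M_{gh}` for all composable pairs. -/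
def GradedModule.EpsilonStrong {Obj : Type u} [Groupoid.{v} Obj]
    [DecidableEq (MorTot Obj)] {S : Type w} [Ring S] {hS : GroupoidGrading Obj S}
    {M : Type w} [AddCommGroup M] [Module S M] (gM : GradedModule hS M) : Prop :=
  (∀ ⦃X Y : Obj⦄ (g : X ⟶ Y),
     IsUnitalIdealOf (aMul (hS.comp g) (hS.comp (Groupoid.inv g))) (hS.comp (𝟙 X))) ∧
  (∀ ⦃X Y Z : Obj⦄ (g : X ⟶ Y) (h : Y ⟶ Z),
     aSMul (hS.comp g) (gM.comp h)
       = aSMul (aMul (hS.comp g) (hS.comp (Groupoid.inv g))) (gM.comp (g ≫ h)))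

set_option linter.unusedSectionVars false

section Aux

variable {Obj : Type u} [Groupoid.{v} Obj] [DecidableEq (MorTot Obj)]
  {S : Type w} [Ring S]

open AddSubgroup in
theorem mem_aMul {A B : AddSubgroup S} {a b : S} (ha : a ∈ A) (hb : b ∈ B) :
    a * b ∈ aMul A B :=
  AddSubgroup.subset_closure ⟨a, ha, b, hb, rfl⟩

theorem aMul_le {A B C : AddSubgroup S} (h : ∀ a ∈ A, ∀ b ∈ B, a * b ∈ C) :
    aMul A B ≤ C := by
  rw [aMul, AddSubgroup.closure_le]
  rintro x ⟨a, ha, b, hb, rfl⟩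
  exact h a ha b hb

variable {M : Type w} [AddCommGroup M] [Module S M]

theorem mem_aSMul {A : AddSubgroup S} {B : AddSubgroup M} {a : S} {b : M}
    (ha : a ∈ A) (hb : b ∈ B) : a • b ∈ aSMul A B :=
  AddSubgroup.subset_closure ⟨a, ha, b, hb, rfl⟩

theorem aSMul_le {A : AddSubgroup S} {B : AddSubgroup M} {C : AddSubgroup M}
    (h : ∀ a ∈ A, ∀ b ∈ B, a • b ∈ C) : aSMul A B ≤ C := by
  rw [aSMul, AddSubgroup.closure_le]
  rintro x ⟨a, ha, b, hb, rfl⟩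
  exact h a ha b hb

theorem aSMul_eq_aMul (A B : AddSubgroup S) : aSMul A B = aMul A B := by
  unfold aSMul aMul
  congr 1

/-- smul-by-fixed-module-element as an `AddMonoidHom` in the scalar. -/
def smulHom (m : M) : S →+ M where
  toFun s := s • m
  map_zero' := zero_smul S m
  map_add' a b := add_smul a b m

/-- if `x` lies in `aMul A B` and every generator `a*b` satisfies `(a*b) • m ∈ C`,
then `x • m ∈ C`. -/
theorem smul_mem_of_mem_aMul {A B : AddSubgroup S} {C : AddSubgroup M} {x : S} {m : M}
    (hx : x ∈ aMul A B) (h : ∀ a ∈ A, ∀ b ∈ B, (a * b) • m ∈ C) : x • m ∈ C := by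
  have : aMul A B ≤ C.comap (smulHom m) := by
    rw [aMul, AddSubgroup.closure_le]
    rintro y ⟨a, ha, b, hb, rfl⟩
    exact h a ha b hb
  exact this hx

/-- if `w ∈ aMul A B` and every generator satisfies `r * (a*b) ∈ C`, then `r * w ∈ C`. -/
theorem mul_mem_of_mem_aMul_right {A B : AddSubgroup S} {C : AddSubgroup S} {w : S} {r : S}
    (hw : w ∈ aMul A B) (h : ∀ a ∈ A, ∀ b ∈ B, r * (a * b) ∈ C) : r * w ∈ C := by
  have : aMul A B ≤ C.comap (AddMonoidHom.mulLeft r) := by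
    rw [aMul, AddSubgroup.closure_le]
    rintro y ⟨a, ha, b, hb, rfl⟩
    exact h a ha b hb
  exact this hw

theorem mul_mem_of_mem_aMul_left {A B : AddSubgroup S} {C : AddSubgroup S} {w : S} {r : S}
    (hw : w ∈ aMul A B) (h : ∀ a ∈ A, ∀ b ∈ B, (a * b) * r ∈ C) : w * r ∈ C := by
  have : aMul A B ≤ C.comap (AddMonoidHom.mulRight r) := by
    rw [aMul, AddSubgroup.closure_le]
    rintro y ⟨a, ha, b, hb, rfl⟩
    exact h a ha b hb
  exact this hw

end Aux
section Decomp

variable {Obj : Type u} [Groupoid.{v} Obj] [DecidableEq (MorTot Obj)]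
  {S : Type w} [Ring S]

variable {N : Type w} [AddCommGroup N] {A : MorTot Obj → AddSubgroup N}

/-- The decomposition `AddEquiv` attached to an internal direct sum. -/
noncomputable def deq (hA : DirectSum.IsInternal A) : (⨁ i, A i) ≃+ N :=
  AddEquiv.ofBijective (DirectSum.coeAddMonoidHom A) hA

theorem deq_apply (hA : DirectSum.IsInternal A) (v : ⨁ i, A i) :
    deq hA v = DirectSum.coeAddMonoidHom A v := rfl

theorem deq_symm_of_mem (hA : DirectSum.IsInternal A) {i : MorTot Obj} {x : N}
    (hx : x ∈ A i) :
    (deq hA).symm x = DirectSum.of (fun i => A i) i ⟨x, hx⟩ := by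
  apply (deq hA).injective
  rw [AddEquiv.apply_symm_apply, deq_apply]
  exact (DirectSum.coeAddMonoidHom_of A i ⟨x, hx⟩).symm

/-- Evaluation of the decomposition at an index, as an `AddMonoidHom N →+ N`. -/
noncomputable def decEval (hA : DirectSum.IsInternal A) (i : MorTot Obj) : N →+ N :=
  ((A i).subtype.comp (DFinsupp.evalAddMonoidHom i)).comp (deq hA).symm.toAddMonoidHom

theorem decEval_apply (hA : DirectSum.IsInternal A) (i : MorTot Obj) (x : N) :
    decEval hA i x = (((deq hA).symm x) i : N) := rfl

theorem decEval_of_mem (hA : DirectSum.IsInternal A) {i : MorTot Obj} {x : N}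
    (hx : x ∈ A i) : decEval hA i x = x := by
  rw [decEval_apply, deq_symm_of_mem hA hx, DirectSum.of_eq_same]

theorem decEval_of_mem_ne (hA : DirectSum.IsInternal A) {i j : MorTot Obj} {x : N}
    (hx : x ∈ A j) (hne : j ≠ i) : decEval hA i x = 0 := by
  rw [decEval_apply, deq_symm_of_mem hA hx, DirectSum.of_eq_of_ne _ _ _ hne.symm,
    ZeroMemClass.coe_zero]

end Decomp

section OneComp

variable {Obj : Type u} [Groupoid.{v} Obj] [DecidableEq (MorTot Obj)]
  {S : Type w} [Ring S]

theorem GroupoidGrading.oneComponent_eq (hS : GroupoidGrading Obj S) (X : Obj) :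
    hS.oneComponent X = (((deq hS.internal).symm 1) ⟨X, X, 𝟙 X⟩ : S) := by
  have : (Equiv.ofBijective _ hS.internal).symm (1 : S) = (deq hS.internal).symm 1 := by
    apply hS.internal.injective
    have h1 : (DirectSum.coeAddMonoidHom fun g : MorTot Obj => hS.comp g.2.2)
        ((Equiv.ofBijective _ hS.internal).symm 1) = (1 : S) :=
      Equiv.ofBijective_apply_symm_apply _ hS.internal 1
    rw [h1, ← deq_apply]
    exact ((deq hS.internal).apply_symm_apply 1).symm
  rw [GroupoidGrading.oneComponent, this]

theorem GroupoidGrading.oneComponent_mem (hS : GroupoidGrading Obj S) (X : Obj) :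
    hS.oneComponent X ∈ hS.comp (𝟙 X) := by
  rw [hS.oneComponent_eq X]
  exact SetLike.coe_mem _

end OneComp
section Units

variable {Obj : Type u} [Groupoid.{v} Obj] [DecidableEq (MorTot Obj)]
  {S : Type w} [Ring S]

/-- Left local unit for modules: `(1)_{𝟙 Y} • m = m` for `m ∈ M_h`, `h : Y ⟶ Z`. -/
theorem GradedModule.oneComponent_smul {hS : GroupoidGrading Obj S}
    {M : Type w} [AddCommGroup M] [Module S M] (gM : GradedModule hS M)
    {Y Z : Obj} (h : Y ⟶ Z) {m : M} (hm : m ∈ gM.comp h) :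
    hS.oneComponent Y • m = m := by
  classical
  let F₁ : (⨁ i : MorTot Obj, (fun g : MorTot Obj => hS.comp g.2.2) i) →+ M :=
    ((decEval gM.internal ⟨Y, Z, h⟩).comp (smulHom m)).comp
      (DirectSum.coeAddMonoidHom (fun g : MorTot Obj => hS.comp g.2.2))
  let F₂ : (⨁ i : MorTot Obj, (fun g : MorTot Obj => hS.comp g.2.2) i) →+ M :=
    ((smulHom m).comp (hS.comp (𝟙 Y)).subtype).comp
      (DFinsupp.evalAddMonoidHom (⟨Y, Y, 𝟙 Y⟩ : MorTot Obj))
  have hF : F₁ = F₂ := by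
    refine DirectSum.addHom_ext (fun k s => ?_)
    have hF1 : F₁ (DirectSum.of _ k s)
        = decEval gM.internal ⟨Y, Z, h⟩ ((s : S) • m) := by
      simp only [F₁, AddMonoidHom.comp_apply, DirectSum.coeAddMonoidHom_of]
      rfl
    have hF2 : F₂ (DirectSum.of _ k s)
        = ((DirectSum.of (fun g : MorTot Obj => hS.comp g.2.2) k s
            ⟨Y, Y, 𝟙 Y⟩ : S)) • m := rfl
    rw [hF1, hF2]
    by_cases hk : k = (⟨Y, Y, 𝟙 Y⟩ : MorTot Obj)
    · subst hk
      rw [DirectSum.of_eq_same]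
      have hmem : (s : S) • m ∈ gM.comp h := by
        have := gM.smul_mem (𝟙 Y) h s.2 hm
        rwa [Category.id_comp] at this
      exact decEval_of_mem gM.internal hmem
    · rw [DirectSum.of_eq_of_ne _ _ _ (Ne.symm hk), ZeroMemClass.coe_zero, zero_smul]
      obtain ⟨A, B, f⟩ := k
      by_cases hBY : B = Y
      · subst hBY
        have hmem : (s : S) • m ∈ gM.comp (f ≫ h) := gM.smul_mem f h s.2 hm
        refine decEval_of_mem_ne gM.internal hmem (j := ⟨A, Z, f ≫ h⟩) ?_
        intro heq
        obtain ⟨rfl, h2⟩ := Sigma.mk.inj_iff.mp heq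
        obtain ⟨-, h3⟩ := Sigma.mk.inj_iff.mp (eq_of_heq h2)
        have hfh : f ≫ h = h := eq_of_heq h3
        have hf : f = 𝟙 A := by
          have := congrArg (fun t => t ≫ Groupoid.inv h) hfh
          simpa [Category.assoc] using this
        exact hk (by rw [hf])
      · have h0 : (s : S) • m = 0 := gM.smul_eq_zero f h hBY s.2 hm
        rw [h0, map_zero]
  have e1 : F₁ ((deq hS.internal).symm 1) = m := by
    show decEval gM.internal ⟨Y, Z, h⟩
      ((DirectSum.coeAddMonoidHom _ ((deq hS.internal).symm 1)) • m) = m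
    rw [← deq_apply hS.internal, (deq hS.internal).apply_symm_apply, one_smul]
    exact decEval_of_mem gM.internal hm
  have e2 : F₂ ((deq hS.internal).symm 1) = hS.oneComponent Y • m := by
    rw [hS.oneComponent_eq Y]
    rfl
  rw [← e2, ← hF, e1]

/-- Right local unit in the ring: `s * (1)_{𝟙 Y} = s` for `s ∈ S_g`, `g : X ⟶ Y`. -/
theorem GroupoidGrading.mul_oneComponent (hS : GroupoidGrading Obj S)
    {X Y : Obj} (g : X ⟶ Y) {s : S} (hs : s ∈ hS.comp g) :
    s * hS.oneComponent Y = s := by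
  classical
  let F₁ : (⨁ i : MorTot Obj, (fun g : MorTot Obj => hS.comp g.2.2) i) →+ S :=
    ((decEval hS.internal ⟨X, Y, g⟩).comp (AddMonoidHom.mulLeft s)).comp
      (DirectSum.coeAddMonoidHom (fun g : MorTot Obj => hS.comp g.2.2))
  let F₂ : (⨁ i : MorTot Obj, (fun g : MorTot Obj => hS.comp g.2.2) i) →+ S :=
    ((AddMonoidHom.mulLeft s).comp (hS.comp (𝟙 Y)).subtype).comp
      (DFinsupp.evalAddMonoidHom (⟨Y, Y, 𝟙 Y⟩ : MorTot Obj))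
  have hF : F₁ = F₂ := by
    refine DirectSum.addHom_ext (fun k t => ?_)
    have hF1 : F₁ (DirectSum.of _ k t)
        = decEval hS.internal ⟨X, Y, g⟩ (s * (t : S)) := by
      simp only [F₁, AddMonoidHom.comp_apply, DirectSum.coeAddMonoidHom_of]
      rfl
    have hF2 : F₂ (DirectSum.of _ k t)
        = s * ((DirectSum.of (fun g : MorTot Obj => hS.comp g.2.2) k t
            ⟨Y, Y, 𝟙 Y⟩ : S)) := rfl
    rw [hF1, hF2]
    by_cases hk : k = (⟨Y, Y, 𝟙 Y⟩ : MorTot Obj)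
    · subst hk
      rw [DirectSum.of_eq_same]
      have hmem : s * (t : S) ∈ hS.comp g := by
        have := hS.mul_mem g (𝟙 Y) hs t.2
        rwa [Category.comp_id] at this
      exact decEval_of_mem hS.internal hmem
    · rw [DirectSum.of_eq_of_ne _ _ _ (Ne.symm hk), ZeroMemClass.coe_zero, mul_zero]
      obtain ⟨A, B, f⟩ := k
      by_cases hYA : A = Y
      · subst hYA
        have hmem : s * (t : S) ∈ hS.comp (g ≫ f) := hS.mul_mem g f hs t.2
        refine decEval_of_mem_ne hS.internal hmem (j := ⟨X, B, g ≫ f⟩) ?_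
        intro heq
        obtain ⟨-, h2⟩ := Sigma.mk.inj_iff.mp heq
        obtain ⟨rfl, h3⟩ := Sigma.mk.inj_iff.mp (eq_of_heq h2)
        have hgf : g ≫ f = g := eq_of_heq h3
        have hf : f = 𝟙 B := by
          have := congrArg (fun t => Groupoid.inv g ≫ t) hgf
          simpa [← Category.assoc] using this
        exact hk (by rw [hf])
      · have h0 : s * (t : S) = 0 := hS.mul_eq_zero g f (fun he => hYA he.symm) hs t.2
        rw [h0, map_zero]
  have e1 : F₁ ((deq hS.internal).symm 1) = s := by
    show decEval hS.internal ⟨X, Y, g⟩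
      (s * (DirectSum.coeAddMonoidHom _ ((deq hS.internal).symm 1))) = s
    rw [← deq_apply hS.internal, (deq hS.internal).apply_symm_apply, mul_one]
    exact decEval_of_mem hS.internal hs
  have e2 : F₂ ((deq hS.internal).symm 1) = s * hS.oneComponent Y := by
    rw [hS.oneComponent_eq Y]
    rfl
  rw [← e2, ← hF, e1]

end Units
section Main

variable {Obj : Type u} [Groupoid.{v} Obj] [DecidableEq (MorTot Obj)]
  {S : Type w} [Ring S]

theorem ginv_ginv {X Y : Obj} (g : X ⟶ Y) : Groupoid.inv (Groupoid.inv g) = g := by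
  simp [Groupoid.inv_eq_inv]

theorem GroupoidGrading.comp_eq_aMul_id (hS : GroupoidGrading Obj S) {X Y : Obj} (g : X ⟶ Y) :
    hS.comp g = aMul (hS.comp g) (hS.comp (𝟙 Y)) := by
  apply le_antisymm
  · intro s hs
    rw [← hS.mul_oneComponent g hs]
    exact mem_aMul hs (hS.oneComponent_mem Y)
  · apply aMul_le
    intro a ha b hb
    have := hS.mul_mem g (𝟙 Y) ha hb
    rwa [Category.comp_id] at this

/-- From the "left" family of equalities, `S_g = (S_g S_{g⁻¹}) S_g`. -/
theorem GroupoidGrading.key (hS : GroupoidGrading Obj S)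
    (H2a : ∀ ⦃X Y Z : Obj⦄ (g : X ⟶ Y) (h : Y ⟶ Z),
      aMul (hS.comp g) (hS.comp h)
        = aMul (aMul (hS.comp g) (hS.comp (Groupoid.inv g))) (hS.comp (g ≫ h)))
    {X Y : Obj} (g : X ⟶ Y) :
    hS.comp g = aMul (aMul (hS.comp g) (hS.comp (Groupoid.inv g))) (hS.comp g) := by
  have h1 := H2a g (𝟙 Y)
  rw [Category.comp_id] at h1
  conv_lhs => rw [hS.comp_eq_aMul_id g]
  exact h1

/-- The self grading of `S` as a module over itself. -/
def GroupoidGrading.selfGraded (hS : GroupoidGrading Obj S) : GradedModule hS S where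
  comp := hS.comp
  internal := hS.internal
  smul_mem X Y Z g h s m hs hm := by
    simpa [smul_eq_mul] using hS.mul_mem g h hs hm
  smul_eq_zero X Y Z W g h hne s m hs hm := by
    simpa [smul_eq_mul] using hS.mul_eq_zero g h hne hs hm

end Main


/-- `S` is epsilon-strongly graded if and only if every graded
left `S`-module `M` is epsilon-strongly graded. -/
theorem epsilonStrong_iff_modules (hS : GroupoidGrading Obj S) :
    hS.EpsilonStrong ↔
    ∀ (M : Type w) [AddCommGroup M] [Module S M] (gM : GradedModule hS M),
      gM.EpsilonStrong := by
  constructor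
  · rintro ⟨h1, h2⟩ M _ _ gM
    refine ⟨h1, fun X Y Z g h => ?_⟩
    apply le_antisymm
    · apply aSMul_le
      intro s hs m hm
      have hs' : s ∈ aMul (aMul (hS.comp g) (hS.comp (Groupoid.inv g))) (hS.comp g) := by
        rw [← hS.key (fun _ _ _ g h => (h2 g h).1) g]; exact hs
      refine smul_mem_of_mem_aMul hs' (fun a ha b hb => ?_)
      rw [mul_smul]
      exact mem_aSMul ha (gM.smul_mem g h hb hm)
    · apply aSMul_le
      intro a ha n hn
      refine smul_mem_of_mem_aMul ha (fun x hx y hy => ?_)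
      rw [mul_smul]
      have hyn := gM.smul_mem (Groupoid.inv g) (g ≫ h) hy hn
      rw [← Category.assoc, Groupoid.inv_comp, Category.id_comp] at hyn
      exact mem_aSMul hx hyn
  · intro H
    obtain ⟨h1, h2⟩ := H S hS.selfGraded
    have H2a : ∀ ⦃X Y Z : Obj⦄ (g : X ⟶ Y) (h : Y ⟶ Z),
        aMul (hS.comp g) (hS.comp h)
          = aMul (aMul (hS.comp g) (hS.comp (Groupoid.inv g))) (hS.comp (g ≫ h)) := by
      intro X Y Z g h
      have h3 := h2 g h
      rwa [aSMul_eq_aMul, aSMul_eq_aMul] at h3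
    have leftunit : ∀ ⦃X Y : Obj⦄ (g : X ⟶ Y) (e : S),
        (∀ x ∈ aMul (hS.comp g) (hS.comp (Groupoid.inv g)), e * x = x) →
        ∀ s ∈ hS.comp g, e * s = s := by
      intro X Y g e hunit s hs
      have hs' : s ∈ aMul (aMul (hS.comp g) (hS.comp (Groupoid.inv g))) (hS.comp g) := by
        rw [← hS.key H2a g]; exact hs
      have hker : aMul (aMul (hS.comp g) (hS.comp (Groupoid.inv g))) (hS.comp g)
          ≤ (AddMonoidHom.mulLeft e - AddMonoidHom.id S).ker := by
        apply aMul_le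
        intro a ha b hb
        rw [AddMonoidHom.mem_ker, AddMonoidHom.sub_apply, AddMonoidHom.id_apply]
        show e * (a * b) - a * b = 0
        rw [← mul_assoc, hunit a ha, sub_self]
      have h0 := hker hs'
      rw [AddMonoidHom.mem_ker, AddMonoidHom.sub_apply, AddMonoidHom.id_apply] at h0
      exact sub_eq_zero.mp h0
    have rightunit : ∀ ⦃X Y : Obj⦄ (g : X ⟶ Y),
        ∃ e' ∈ aMul (hS.comp (Groupoid.inv g)) (hS.comp g),
          ∀ s ∈ hS.comp g, s * e' = s := by
      intro X Y g
      have hI' := h1 (Groupoid.inv g)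
      rw [ginv_ginv] at hI'
      obtain ⟨hle', _, e', he', hunit'⟩ := hI'
      refine ⟨e', he', fun s hs => ?_⟩
      obtain ⟨hle, _, e, he, hunit⟩ := h1 g
      set u := s - s * e' with hu
      have hu_mem : u ∈ hS.comp g := by
        apply sub_mem hs
        have h1' : e' ∈ hS.comp (𝟙 Y) := hle' he'
        have h2' := hS.mul_mem g (𝟙 Y) hs h1'
        rwa [Category.comp_id] at h2'
      have htu : ∀ t ∈ hS.comp (Groupoid.inv g), t * u = 0 := by
        intro t ht
        have hts : t * s ∈ aMul (hS.comp (Groupoid.inv g)) (hS.comp g) := mem_aMul ht hs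
        have h3 : t * (s * e') = t * s := by rw [← mul_assoc, (hunit' (t * s) hts).2]
        rw [hu, mul_sub, h3, sub_self]
      have heu : e * u = 0 := by
        have hker : aMul (hS.comp g) (hS.comp (Groupoid.inv g))
            ≤ (AddMonoidHom.mulRight u).ker := by
          apply aMul_le
          intro a ha b hb
          rw [AddMonoidHom.mem_ker, AddMonoidHom.mulRight_apply, mul_assoc,
            htu b hb, mul_zero]
        have h0 := hker he
        rwa [AddMonoidHom.mem_ker, AddMonoidHom.mulRight_apply] at h0
      have hu0 : u = 0 := by
        have h4 := leftunit g e (fun x hx => (hunit x hx).1) u hu_mem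
        rw [heu] at h4
        exact h4.symm
      have h5 : s - s * e' = 0 := by rw [← hu, hu0]
      exact (sub_eq_zero.mp h5).symm
    refine ⟨h1, fun X Y Z g h => ⟨H2a g h, ?_⟩⟩
    obtain ⟨e', he', hre⟩ := rightunit h
    apply le_antisymm
    · apply aMul_le
      intro s hs t ht
      have h6 : (s * t) * e' = s * t := by rw [mul_assoc, hre t ht]
      rw [← h6]
      exact mem_aMul (hS.mul_mem g h hs ht) he'
    · apply aMul_le
      intro r hr w hw
      refine mul_mem_of_mem_aMul_right hw (fun x hx y hy => ?_)
      have hrx := hS.mul_mem (g ≫ h) (Groupoid.inv h) hr hx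
      rw [Category.assoc, Groupoid.comp_inv, Category.comp_id] at hrx
      rw [← mul_assoc]
      exact mem_aMul hrx hy
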